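/- Let R be a synchronous order on ℕ such that E = ℕ ∖ supp(R) is infinite. Then there exists a synchronous order S with supp(S) = E such that (E, S) is order-isomorphic to ℕ (respectively, to ℕ with the reversed order) and such that R + S := R ∪ S ∪ (supp(R) × E) is a complete synchronous order on ℕ; moreover (ℕ, R + S) is order-isomorphic to the lexicographic sum of (supp(R), R) followed by (E, S). -/

import Mathlib

/-- Encoding of a pair of naturals as a word over the alphabet `Fin 3`,
where letter `0` stands for `B`, `1` for `L`, `2` for `R`. -/
def encPair (k l : ℕ) : List (Fin 3) :=
  (List.range (max k l)).map (fun i => if i < min k l then 0 else if i < k then 1 else 2)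

/-- A binary relation on ℕ is synchronous if the language of encodings of its pairs
is regular. -/
def SyncRel (R : ℕ → ℕ → Prop) : Prop :=
  Language.IsRegular {w : List (Fin 3) | ∃ k l, R k l ∧ encPair k l = w}

/-- The support of a binary relation on ℕ. -/
def supp (R : ℕ → ℕ → Prop) : Set ℕ := {x | ∃ y, R x y ∨ R y x}

/-- A (strict partial) order on ℕ: a transitive relation with no 2-cycle
(in particular irreflexive). -/
def IsOrderRel (R : ℕ → ℕ → Prop) : Prop :=
  (∀ x y z, R x y → R y z → R x z) ∧ ¬∃ x y, R x y ∧ R y x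

/-- The relation is linear if any two distinct elements of the support are comparable. -/
def IsLinearRel (R : ℕ → ℕ → Prop) : Prop :=
  ∀ x ∈ supp R, ∀ y ∈ supp R, x ≠ y → R x y ∨ R y x

/-- The restriction of a relation on ℕ to its support. -/
def restrict (R : ℕ → ℕ → Prop) : supp R → supp R → Prop := fun a b => R a b

/-- The sum `R + R'` of two orders: `R ∪ R' ∪ (supp R × supp R')`. -/
def sumRel (R S : ℕ → ℕ → Prop) : ℕ → ℕ → Prop :=
  fun a b => R a b ∨ S a b ∨ (a ∈ supp R ∧ b ∈ supp S)

open List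


lemma encPair_lt {k l : ℕ} (h : k < l) :
    encPair k l = List.replicate k (0:Fin 3) ++ List.replicate (l-k) 2 := by
  unfold encPair
  apply List.ext_getElem
  · simp; omega
  · intro i h1 h2
    simp only [List.length_map, List.length_range] at h1
    simp only [List.length_append, List.length_replicate] at h2
    simp only [List.getElem_map, List.getElem_range, List.getElem_append,
      List.getElem_replicate, List.length_replicate]
    split_ifs <;> first | rfl | omega
  
lemma encPair_gt {k l : ℕ} (h : l < k) :
    encPair k l = List.replicate l (0:Fin 3) ++ List.replicate (k-l) 1 := by
  unfold encPair
  apply List.ext_getElem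
  · simp; omega
  · intro i h1 h2
    simp only [List.length_map, List.length_range] at h1
    simp only [List.length_append, List.length_replicate] at h2
    simp only [List.getElem_map, List.getElem_range, List.getElem_append,
      List.getElem_replicate, List.length_replicate]
    split_ifs <;> first | rfl | omega

lemma encPair_self (k : ℕ) : encPair k k = List.replicate k (0:Fin 3) := by
  unfold encPair
  apply List.ext_getElem
  · simp
  · intro i h1 h2
    simp only [List.length_replicate] at h2
    simp only [List.getElem_map, List.getElem_range, List.getElem_replicate]
    have : i < min k k := by omega
    rw [if_pos this]

lemma encPair_eq_zo {k l a b : ℕ} (hb : 1 ≤ b)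
    (h : encPair k l = List.replicate a (0:Fin 3) ++ List.replicate b 1) :
    l = a ∧ k = a + b := by
  rcases Nat.lt_trichotomy k l with hkl | hkl | hkl
  · rw [encPair_lt hkl] at h
    have := congrArg (List.count (1 : Fin 3)) h
    simp [List.count_append, List.count_replicate] at this
    omega
  · subst hkl
    rw [encPair_self] at h
    have := congrArg (List.count (1 : Fin 3)) h
    simp [List.count_append, List.count_replicate] at this
    omega
  · rw [encPair_gt hkl] at h
    have h0 := congrArg (List.count (0 : Fin 3)) h
    have h1 := congrArg (List.count (1 : Fin 3)) h
    simp [List.count_append, List.count_replicate] at h0 h1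
    omega

lemma encPair_eq_zt {k l a b : ℕ} (hb : 1 ≤ b)
    (h : encPair k l = List.replicate a (0:Fin 3) ++ List.replicate b 2) :
    k = a ∧ l = a + b := by
  rcases Nat.lt_trichotomy k l with hkl | hkl | hkl
  · rw [encPair_lt hkl] at h
    have h0 := congrArg (List.count (0 : Fin 3)) h
    have h1 := congrArg (List.count (2 : Fin 3)) h
    simp [List.count_append, List.count_replicate] at h0 h1
    omega
  · subst hkl
    rw [encPair_self] at h
    have := congrArg (List.count (2 : Fin 3)) h
    simp [List.count_append, List.count_replicate] at this
    omega
  · rw [encPair_gt hkl] at h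
    have := congrArg (List.count (2 : Fin 3)) h
    simp [List.count_append, List.count_replicate] at this
    omega


/-- `X` is periodic with period `p` from `N` on. -/
def Per (X : Set ℕ) (N p : ℕ) : Prop := ∀ n, N ≤ n → (n ∈ X ↔ n + p ∈ X)

lemma Per.add_mul {X : Set ℕ} {N p : ℕ} (h : Per X N p) (k n : ℕ) (hn : N ≤ n) :
    n ∈ X ↔ n + k * p ∈ X := by
  induction k with
  | zero => simp
  | succ k ih =>
    rw [ih, h (n + k * p) (le_trans hn (Nat.le_add_right _ _))]
    ring_nf

lemma Per.compl {X : Set ℕ} {N p : ℕ} (h : Per X N p) : Per Xᶜ N p := by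
  intro n hn
  simp [Set.mem_compl_iff, h n hn]

lemma Per.empty (N p : ℕ) : Per (∅ : Set ℕ) N p := by intro n _; simp

lemma Per.univ (N p : ℕ) : Per (Set.univ : Set ℕ) N p := by intro n _; simp

/-- Orbits of a self-map of a finite type yield eventually periodic sets. -/
lemma per_of_iterate {T : Type} [Finite T] (F : T → T) (x : T) (P : T → Prop) :
    ∃ N p, 0 < p ∧ Per {n | P (F^[n] x)} N p := by
  obtain ⟨i, j, hne, heq⟩ := Finite.exists_ne_map_eq_of_infinite (fun n : ℕ => F^[n] x)
  have key : ∀ i j : ℕ, i < j → F^[i] x = F^[j] x →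
      ∃ N p, 0 < p ∧ Per {n | P (F^[n] x)} N p := by
    intro i j hij heq
    refine ⟨i, j - i, by omega, fun n hn => ?_⟩
    have : F^[n + (j - i)] x = F^[n] x := by
      have h1 : n + (j - i) = (n - i) + j := by omega
      have h2 : n = (n - i) + i := by omega
      rw [h1, Function.iterate_add_apply, ← heq, ← Function.iterate_add_apply, ← h2]
    simp only [Set.mem_setOf_eq, this]
  rcases Nat.lt_or_ge i j with hij | hij
  · exact key i j hij heq
  · exact key j i (by omega) heq.symm

/-- canonical representative below `N + p` -/
def repc (N p n : ℕ) : ℕ := if n < N + p then n else N + (n - N) % p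

lemma repc_lt {N p : ℕ} (hp : 0 < p) (n : ℕ) : repc N p n < N + p := by
  unfold repc
  split
  · omega
  · have := Nat.mod_lt (n - N) hp
    omega

lemma Per.repc_mem {X : Set ℕ} {N p : ℕ} (h : Per X N p) (hp : 0 < p) (n : ℕ) :
    n ∈ X ↔ repc N p n ∈ X := by
  unfold repc
  split
  · rfl
  · rename_i hn
    have hd := Nat.div_add_mod (n - N) p
    have hcomm : ((n - N) / p) * p = p * ((n - N) / p) := Nat.mul_comm _ _
    have : n = N + (n - N) % p + ((n - N) / p) * p := by omega
    rw [show (n ∈ X ↔ _) from iff_of_eq (congrArg (· ∈ X) this)]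
    exact (h.add_mul _ _ (Nat.le_add_right _ _)).symm

lemma repc_succ {N p : ℕ} (hp : 0 < p) (n : ℕ) :
    repc N p (n + 1) = if repc N p n + 1 < N + p then repc N p n + 1 else N := by
  have hr : (n - N) % p < p := Nat.mod_lt _ hp
  rcases Nat.lt_trichotomy (n + 1) (N + p) with h | h | h
  · have e1 : repc N p n = n := by unfold repc; rw [if_pos (by omega)]
    have e2 : repc N p (n + 1) = n + 1 := by unfold repc; rw [if_pos h]
    rw [e1, e2, if_pos (by omega)]
  · have e1 : repc N p n = n := by unfold repc; rw [if_pos (by omega)]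
    have e2 : repc N p (n + 1) = N := by
      unfold repc
      rw [if_neg (by omega)]
      have hpp : n + 1 - N = p := by omega
      rw [hpp, Nat.mod_self]
      omega
    rw [e1, e2, if_neg (by omega)]

  · have hd := Nat.div_add_mod (n - N) p
    have e1 : repc N p n = N + (n - N) % p := by unfold repc; rw [if_neg (by omega)]
    have he : n + 1 - N = p * ((n - N) / p) + ((n - N) % p + 1) := by omega
    rcases Nat.lt_or_ge ((n - N) % p + 1) p with hc | hc
    · have e2 : repc N p (n + 1) = N + ((n - N) % p + 1) := by
        unfold repc
        rw [if_neg (by omega), he, Nat.mul_add_mod, Nat.mod_eq_of_lt hc]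
      rw [e1, e2, if_pos (by omega)]
      omega
    · have hpe : (n - N) % p + 1 = p := by omega
      have e2 : repc N p (n + 1) = N := by
        unfold repc
        rw [if_neg (by omega), he, hpe,
          show p * ((n - N) / p) + p = p * ((n - N) / p + 1) by ring, Nat.mul_mod_right]
        omega
      rw [e1, e2, if_neg (by omega)]

section RegDFA

variable (N p : ℕ) (hp : 0 < p)

def rfin (n : ℕ) : Fin (N + p) := ⟨repc N p n, repc_lt hp n⟩

def rinc (x : Fin (N + p)) : Fin (N + p) :=
  if h : x.val + 1 < N + p then ⟨x.val + 1, h⟩ else ⟨N, by omega⟩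

lemma rinc_rfin (n : ℕ) : rinc N p hp (rfin N p hp n) = rfin N p hp (n + 1) := by
  apply Fin.ext
  simp only [rinc, rfin]
  rw [repc_succ hp]
  by_cases h : repc N p n + 1 < N + p
  · simp [h]
  · simp [h]

def rdead : Bool × Fin 3 × Fin (N + p) × Fin (N + p) := (true, 0, ⟨N, by omega⟩, ⟨N, by omega⟩)

def regDFA (X1 Y1 X2 Y2 : Set ℕ) : DFA (Fin 3) (Bool × Fin 3 × Fin (N + p) × Fin (N + p)) where
  step := fun s c =>
    if s.1 then rdead N p hp
    else if c = 0 then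
      (if s.2.1 = 0 then (false, 0, rinc N p hp s.2.2.1, rinc N p hp s.2.2.2) else rdead N p hp)
    else if c = 1 then
      (if s.2.1 = 2 then rdead N p hp else (false, 1, s.2.2.1, rinc N p hp s.2.2.2))
    else
      (if s.2.1 = 1 then rdead N p hp else (false, 2, s.2.2.1, rinc N p hp s.2.2.2))
  start := (false, 0, rfin N p hp 0, rfin N p hp 0)
  accept := {s | s.1 = false ∧
    ((s.2.1 = 1 ∧ (s.2.2.1 : ℕ) ∈ X1 ∧ (s.2.2.2 : ℕ) ∈ Y1) ∨
     (s.2.1 = 2 ∧ (s.2.2.1 : ℕ) ∈ X2 ∧ (s.2.2.2 : ℕ) ∈ Y2))}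

variable (X1 Y1 X2 Y2 : Set ℕ)

lemma regDFA_eval_zeros (a : ℕ) :
    (regDFA N p hp X1 Y1 X2 Y2).eval (replicate a 0) = (false, 0, rfin N p hp a, rfin N p hp a) := by
  induction a with
  | zero => rfl
  | succ a ih =>
    rw [List.replicate_succ' (n := a) (a := (0 : Fin 3)), DFA.eval_append_singleton, ih]
    simp [regDFA, rinc_rfin]

lemma regDFA_eval_zo (a : ℕ) : ∀ b : ℕ, 1 ≤ b →
    (regDFA N p hp X1 Y1 X2 Y2).eval (replicate a 0 ++ replicate b 1) =
      (false, 1, rfin N p hp a, rfin N p hp (a + b)) := by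
  intro b
  induction b with
  | zero => omega
  | succ b ih =>
    intro _
    rcases Nat.eq_zero_or_pos b with rfl | hb
    · rw [show (replicate a (0:Fin 3) ++ replicate 1 1) = replicate a 0 ++ [1] by simp,
        DFA.eval_append_singleton, regDFA_eval_zeros]
      simp [regDFA, rinc_rfin]
    · rw [List.replicate_succ' (n := b) (a := (1 : Fin 3)), ← List.append_assoc,
        DFA.eval_append_singleton, ih hb,
        show a + (b + 1) = (a + b) + 1 by omega, ← rinc_rfin N p hp (a + b)]
      simp [regDFA]

lemma regDFA_eval_zt (a : ℕ) : ∀ b : ℕ, 1 ≤ b →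
    (regDFA N p hp X1 Y1 X2 Y2).eval (replicate a 0 ++ replicate b 2) =
      (false, 2, rfin N p hp a, rfin N p hp (a + b)) := by
  intro b
  induction b with
  | zero => omega
  | succ b ih =>
    intro _
    rcases Nat.eq_zero_or_pos b with rfl | hb
    · rw [show (replicate a (0:Fin 3) ++ replicate 1 2) = replicate a 0 ++ [2] by simp,
        DFA.eval_append_singleton, regDFA_eval_zeros]
      simp [regDFA, rinc_rfin]
    · rw [List.replicate_succ' (n := b) (a := (2 : Fin 3)), ← List.append_assoc,
        DFA.eval_append_singleton, ih hb,
        show a + (b + 1) = (a + b) + 1 by omega, ← rinc_rfin N p hp (a + b)]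
      simp [regDFA]

lemma regDFA_shape (w : List (Fin 3)) :
    (∃ a, w = replicate a 0) ∨
    (∃ a b, 1 ≤ b ∧ w = replicate a 0 ++ replicate b 1) ∨
    (∃ a b, 1 ≤ b ∧ w = replicate a 0 ++ replicate b 2) ∨
    (regDFA N p hp X1 Y1 X2 Y2).eval w = rdead N p hp := by
  induction w using List.reverseRecOn with
  | nil => exact Or.inl ⟨0, rfl⟩
  | append_singleton w c ih =>
    rcases ih with ⟨a, rfl⟩ | ⟨a, b, hb, rfl⟩ | ⟨a, b, hb, rfl⟩ | hdead
    · fin_cases c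
      · exact Or.inl ⟨a + 1, (List.replicate_succ').symm⟩
      · exact Or.inr (Or.inl ⟨a, 1, le_refl _, by simp⟩)
      · exact Or.inr (Or.inr (Or.inl ⟨a, 1, le_refl _, by simp⟩))
    · fin_cases c
      · refine Or.inr (Or.inr (Or.inr ?_))
        rw [DFA.eval_append_singleton, regDFA_eval_zo N p hp X1 Y1 X2 Y2 a b hb]
        simp [regDFA]
      · refine Or.inr (Or.inl ⟨a, b + 1, by omega, ?_⟩)
        rw [List.replicate_succ' (n := b) (a := (1 : Fin 3)), ← List.append_assoc]
        simp
      · refine Or.inr (Or.inr (Or.inr ?_))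
        rw [DFA.eval_append_singleton, regDFA_eval_zo N p hp X1 Y1 X2 Y2 a b hb]
        simp [regDFA]
    · fin_cases c
      · refine Or.inr (Or.inr (Or.inr ?_))
        rw [DFA.eval_append_singleton, regDFA_eval_zt N p hp X1 Y1 X2 Y2 a b hb]
        simp [regDFA]
      · refine Or.inr (Or.inr (Or.inr ?_))
        rw [DFA.eval_append_singleton, regDFA_eval_zt N p hp X1 Y1 X2 Y2 a b hb]
        simp [regDFA]
      · refine Or.inr (Or.inr (Or.inl ⟨a, b + 1, by omega, ?_⟩))
        rw [List.replicate_succ' (n := b) (a := (2 : Fin 3)), ← List.append_assoc]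
        simp
    · refine Or.inr (Or.inr (Or.inr ?_))
      rw [DFA.eval_append_singleton, hdead]
      simp [regDFA, rdead]

lemma regDFA_accepts (h1 : Per X1 N p) (h2 : Per Y1 N p) (h3 : Per X2 N p) (h4 : Per Y2 N p) :
    (regDFA N p hp X1 Y1 X2 Y2).accepts =
      {w : List (Fin 3) | ∃ a b, 1 ≤ b ∧
        ((a ∈ X1 ∧ a + b ∈ Y1 ∧ w = replicate a 0 ++ replicate b 1) ∨
         (a ∈ X2 ∧ a + b ∈ Y2 ∧ w = replicate a 0 ++ replicate b 2))} := by
  ext w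
  rw [DFA.mem_accepts]
  constructor
  · intro hacc
    rcases regDFA_shape N p hp X1 Y1 X2 Y2 w with ⟨a, rfl⟩ | ⟨a, b, hb, rfl⟩ | ⟨a, b, hb, rfl⟩ | hdead
    · rw [regDFA_eval_zeros] at hacc
      rcases hacc.2 with ⟨h, -⟩ | ⟨h, -⟩ <;> simp at h
    · rw [regDFA_eval_zo N p hp X1 Y1 X2 Y2 a b hb] at hacc
      rcases hacc.2 with ⟨-, hX, hY⟩ | ⟨h, -⟩
      · refine ⟨a, b, hb, Or.inl ⟨?_, ?_, rfl⟩⟩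
        · exact (h1.repc_mem hp a).mpr hX
        · exact (h2.repc_mem hp (a + b)).mpr hY
      · simp at h
    · rw [regDFA_eval_zt N p hp X1 Y1 X2 Y2 a b hb] at hacc
      rcases hacc.2 with ⟨h, -⟩ | ⟨-, hX, hY⟩
      · simp at h
      · refine ⟨a, b, hb, Or.inr ⟨?_, ?_, rfl⟩⟩
        · exact (h3.repc_mem hp a).mpr hX
        · exact (h4.repc_mem hp (a + b)).mpr hY
    · rw [hdead] at hacc
      exact absurd hacc.1 (by simp [rdead])
  · rintro ⟨a, b, hb, ⟨hX, hY, rfl⟩ | ⟨hX, hY, rfl⟩⟩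
    · rw [regDFA_eval_zo N p hp X1 Y1 X2 Y2 a b hb]
      exact ⟨rfl, Or.inl ⟨rfl, (h1.repc_mem hp a).mp hX, (h2.repc_mem hp (a + b)).mp hY⟩⟩
    · rw [regDFA_eval_zt N p hp X1 Y1 X2 Y2 a b hb]
      exact ⟨rfl, Or.inr ⟨rfl, (h3.repc_mem hp a).mp hX, (h4.repc_mem hp (a + b)).mp hY⟩⟩

end RegDFA

lemma regOfPer (N p : ℕ) (hp : 0 < p) (X1 Y1 X2 Y2 : Set ℕ)
    (h1 : Per X1 N p) (h2 : Per Y1 N p) (h3 : Per X2 N p) (h4 : Per Y2 N p) :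
    Language.IsRegular {w : List (Fin 3) | ∃ a b, 1 ≤ b ∧
        ((a ∈ X1 ∧ a + b ∈ Y1 ∧ w = replicate a 0 ++ replicate b 1) ∨
         (a ∈ X2 ∧ a + b ∈ Y2 ∧ w = replicate a 0 ++ replicate b 2))} :=
  ⟨_, inferInstance, regDFA N p hp X1 Y1 X2 Y2, regDFA_accepts N p hp X1 Y1 X2 Y2 h1 h2 h3 h4⟩

/-- Union of two regular languages is regular (product construction). -/
lemma Language.IsRegular.union {α : Type} {L1 L2 : Language α}
    (h1 : L1.IsRegular) (h2 : L2.IsRegular) : Language.IsRegular (L1 + L2) := by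
  obtain ⟨σ1, i1, M1, rfl⟩ := h1
  obtain ⟨σ2, i2, M2, rfl⟩ := h2
  refine ⟨σ1 × σ2, inferInstance,
    ⟨fun s c => (M1.step s.1 c, M2.step s.2 c), (M1.start, M2.start),
     {s | s.1 ∈ M1.accept ∨ s.2 ∈ M2.accept}⟩, ?_⟩
  have key : ∀ (w : List α) (s : σ1 × σ2),
      DFA.evalFrom ⟨fun s c => (M1.step s.1 c, M2.step s.2 c), (M1.start, M2.start),
        {s | s.1 ∈ M1.accept ∨ s.2 ∈ M2.accept}⟩ s w
        = (M1.evalFrom s.1 w, M2.evalFrom s.2 w) := by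
    intro w
    induction w with
    | nil => intro s; rfl
    | cons c w ih =>
      intro s
      simp only [DFA.evalFrom, List.foldl_cons] at *
      rw [ih]
  ext w
  rw [DFA.mem_accepts]
  show _ ∈ ({s | s.1 ∈ M1.accept ∨ s.2 ∈ M2.accept} : Set (σ1 × σ2)) ↔ _
  rw [show DFA.eval _ w = _ from key w _]
  simp [DFA.mem_accepts, DFA.eval]
  rfl

/-- The support of a synchronous order is eventually periodic. -/
lemma per_supp (R : ℕ → ℕ → Prop) (hs : SyncRel R) (ho : IsOrderRel R) :
    ∃ N p, 0 < p ∧ Per (supp R) N p := by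
  obtain ⟨σ, iσ, M, hM⟩ := hs
  classical
  -- machine on σ × Finset σ × Finset σ
  set F : σ × Finset σ × Finset σ → σ × Finset σ × Finset σ := fun y =>
    (M.step y.1 0, insert (M.step y.1 1) (y.2.1.image (fun q => M.step q 1)),
      insert (M.step y.1 2) (y.2.2.image (fun q => M.step q 2))) with hF
  set x0 : σ × Finset σ × Finset σ := (M.start, ∅, ∅) with hx0
  have inv : ∀ n, (F^[n] x0).1 = M.eval (replicate n 0) ∧
      (∀ q, q ∈ (F^[n] x0).2.1 ↔
        ∃ a b, a + b = n ∧ 1 ≤ b ∧ q = M.eval (replicate a 0 ++ replicate b 1)) ∧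
      (∀ q, q ∈ (F^[n] x0).2.2 ↔
        ∃ a b, a + b = n ∧ 1 ≤ b ∧ q = M.eval (replicate a 0 ++ replicate b 2)) := by
    intro n
    induction n with
    | zero =>
      refine ⟨rfl, fun q => ?_, fun q => ?_⟩ <;>
        · simp only [Function.iterate_zero, id_eq, hx0, Finset.notMem_empty, false_iff]
          rintro ⟨a, b, hab, hb, -⟩; omega
    | succ n ih =>
      obtain ⟨ih1, ih2, ih3⟩ := ih
      rw [Function.iterate_succ_apply']
      refine ⟨?_, fun q => ?_, fun q => ?_⟩
      · show M.step (F^[n] x0).1 0 = _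
        rw [ih1, ← DFA.eval_append_singleton, ← List.replicate_succ']
      · show q ∈ insert (M.step (F^[n] x0).1 1) ((F^[n] x0).2.1.image (fun q => M.step q 1)) ↔ _
        rw [Finset.mem_insert, Finset.mem_image]
        constructor
        · rintro (rfl | ⟨q', hq', rfl⟩)
          · exact ⟨n, 1, rfl, le_refl _, by
              rw [ih1, ← DFA.eval_append_singleton]; simp⟩
          · obtain ⟨a, b, hab, hb, rfl⟩ := (ih2 q').mp hq'
            exact ⟨a, b + 1, by omega, by omega, by
              rw [← DFA.eval_append_singleton, List.replicate_succ' (n := b) (a := (1 : Fin 3)),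
                ← List.append_assoc]⟩
        · rintro ⟨a, b, hab, hb, rfl⟩
          rcases Nat.eq_zero_or_pos (b - 1) with hb1 | hb1
          · left
            have : b = 1 := by omega
            subst this
            have : a = n := by omega
            subst this
            rw [ih1, ← DFA.eval_append_singleton]
            simp
          · right
            refine ⟨M.eval (replicate a 0 ++ replicate (b - 1) 1), (ih2 _).mpr ⟨a, b - 1, by omega, by omega, rfl⟩, ?_⟩
            rw [← DFA.eval_append_singleton, List.append_assoc, ← List.replicate_succ' (n := (b-1)) (a := (1 : Fin 3)),
              show b - 1 + 1 = b by omega]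
      · show q ∈ insert (M.step (F^[n] x0).1 2) ((F^[n] x0).2.2.image (fun q => M.step q 2)) ↔ _
        rw [Finset.mem_insert, Finset.mem_image]
        constructor
        · rintro (rfl | ⟨q', hq', rfl⟩)
          · exact ⟨n, 1, rfl, le_refl _, by
              rw [ih1, ← DFA.eval_append_singleton]; simp⟩
          · obtain ⟨a, b, hab, hb, rfl⟩ := (ih3 q').mp hq'
            exact ⟨a, b + 1, by omega, by omega, by
              rw [← DFA.eval_append_singleton, List.replicate_succ' (n := b) (a := (2 : Fin 3)),
                ← List.append_assoc]⟩
        · rintro ⟨a, b, hab, hb, rfl⟩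
          rcases Nat.eq_zero_or_pos (b - 1) with hb1 | hb1
          · left
            have : b = 1 := by omega
            subst this
            have : a = n := by omega
            subst this
            rw [ih1, ← DFA.eval_append_singleton]
            simp
          · right
            refine ⟨M.eval (replicate a 0 ++ replicate (b - 1) 2), (ih3 _).mpr ⟨a, b - 1, by omega, by omega, rfl⟩, ?_⟩
            rw [← DFA.eval_append_singleton, List.append_assoc, ← List.replicate_succ' (n := (b-1)) (a := (2 : Fin 3)),
              show b - 1 + 1 = b by omega]
  set P : σ × Finset σ × Finset σ → Prop := fun y =>
    (∃ b, 1 ≤ b ∧ M.evalFrom y.1 (replicate b 1) ∈ M.accept) ∨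
    (∃ b, 1 ≤ b ∧ M.evalFrom y.1 (replicate b 2) ∈ M.accept) ∨
    (∃ t ∈ y.2.1, t ∈ M.accept) ∨ (∃ t ∈ y.2.2, t ∈ M.accept) with hP
  obtain ⟨N, p, hp, hper⟩ := per_of_iterate F x0 P
  refine ⟨N, p, hp, ?_⟩
  have hsupp : supp R = {n | P (F^[n] x0)} := by
    ext n
    obtain ⟨inv1, inv2, inv3⟩ := inv n
    constructor
    · rintro ⟨m, hm⟩
      have hnm : n ≠ m := by
        rintro rfl
        exact ho.2 ⟨n, n, by tauto⟩
      have hmem : ∀ k l, R k l → encPair k l ∈ M.accepts := by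
        intro k l hkl
        rw [hM]
        exact ⟨k, l, hkl, rfl⟩
      rcases hm with h | h
      · rcases Nat.lt_or_ge n m with hlt | hge
        · -- R n m, n < m : word 0^n 2^(m-n)
          right; left
          refine ⟨m - n, by omega, ?_⟩
          have := hmem n m h
          rw [DFA.mem_accepts, encPair_lt hlt, DFA.eval, M.evalFrom_of_append] at this
          rw [inv1]
          exact this
        · -- R n m, m < n : word 0^m 1^(n-m), q in h1 component
          right; right; left
          refine ⟨M.eval (replicate m 0 ++ replicate (n - m) 1), (inv2 _).mpr ⟨m, n - m, by omega, by omega, rfl⟩, ?_⟩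
          have := hmem n m h
          rw [DFA.mem_accepts, encPair_gt (by omega)] at this
          exact this
      · rcases Nat.lt_or_ge m n with hlt | hge
        · -- R m n, m < n : word 0^m 2^(n-m), in h2 component
          right; right; right
          refine ⟨M.eval (replicate m 0 ++ replicate (n - m) 2), (inv3 _).mpr ⟨m, n - m, by omega, by omega, rfl⟩, ?_⟩
          have := hmem m n h
          rw [DFA.mem_accepts, encPair_lt hlt] at this
          exact this
        · -- R m n, n < m : word 0^n 1^(m-n)
          left
          refine ⟨m - n, by omega, ?_⟩
          have := hmem m n h
          rw [DFA.mem_accepts, encPair_gt (by omega), DFA.eval, M.evalFrom_of_append] at this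
          rw [inv1]
          exact this
    · intro hPn
      have hacc : ∀ w, M.eval w ∈ M.accept → ∃ k l, R k l ∧ encPair k l = w := by
        intro w hw
        have : w ∈ M.accepts := hw
        rwa [hM] at this
      rcases hPn with ⟨b, hb, hw⟩ | ⟨b, hb, hw⟩ | ⟨t, ht, hw⟩ | ⟨t, ht, hw⟩
      · rw [inv1] at hw
        rw [show M.evalFrom (M.eval (replicate n 0)) (replicate b 1)
            = M.eval (replicate n 0 ++ replicate b 1) from (M.evalFrom_of_append _ _ _).symm] at hw
        obtain ⟨k, l, hkl, henc⟩ := hacc _ hw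
        obtain ⟨rfl, rfl⟩ := encPair_eq_zo hb henc
        exact ⟨l + b, Or.inr hkl⟩
      · rw [inv1] at hw
        rw [show M.evalFrom (M.eval (replicate n 0)) (replicate b 2)
            = M.eval (replicate n 0 ++ replicate b 2) from (M.evalFrom_of_append _ _ _).symm] at hw
        obtain ⟨k, l, hkl, henc⟩ := hacc _ hw
        obtain ⟨rfl, rfl⟩ := encPair_eq_zt hb henc
        exact ⟨k + b, Or.inl hkl⟩
      · obtain ⟨a, b, hab, hb, rfl⟩ := (inv2 t).mp ht
        obtain ⟨k, l, hkl, henc⟩ := hacc _ hw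
        obtain ⟨rfl, rfl⟩ := encPair_eq_zo hb henc
        exact ⟨l, Or.inl (by rwa [show l + b = n from hab] at hkl)⟩
      · obtain ⟨a, b, hab, hb, rfl⟩ := (inv3 t).mp ht
        obtain ⟨k, l, hkl, henc⟩ := hacc _ hw
        obtain ⟨rfl, rfl⟩ := encPair_eq_zt hb henc
        exact ⟨k, Or.inr (by rwa [show k + b = n from hab] at hkl)⟩
  rw [hsupp]
  exact hper

lemma relMem {T : ℕ → ℕ → Prop} {k l : ℕ} (h : T k l) : k ∈ supp T ∧ l ∈ supp T :=
  ⟨⟨l, Or.inl h⟩, ⟨k, Or.inr h⟩⟩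

lemma master (R S : ℕ → ℕ → Prop) (ho : IsOrderRel R) (hoS : IsOrderRel S)
    (hSE : ∀ k l, S k l → k ∈ (supp R)ᶜ ∧ l ∈ (supp R)ᶜ)
    (hsupp : supp S = (supp R)ᶜ)
    (hne : (supp R)ᶜ.Nonempty) :
    IsOrderRel (sumRel R S) ∧ supp (sumRel R S) = Set.univ ∧
      Nonempty (restrict (sumRel R S) ≃r Sum.Lex (restrict R) (restrict S)) := by
  classical
  have hSup : ∀ x, x ∈ supp S → x ∉ supp R := by
    intro x hx
    rw [hsupp] at hx
    exact hx
  have hord : IsOrderRel (sumRel R S) := by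
    constructor
    · rintro x y z (hxy | hxy | hxy) (hyz | hyz | hyz)
      · exact Or.inl (ho.1 _ _ _ hxy hyz)
      · exact absurd (relMem hxy).2 (hSE _ _ hyz).1
      · exact Or.inr (Or.inr ⟨(relMem hxy).1, hyz.2⟩)
      · exact absurd (relMem hyz).1 (hSE _ _ hxy).2
      · exact Or.inr (Or.inl (hoS.1 _ _ _ hxy hyz))
      · exact absurd hyz.1 (hSE _ _ hxy).2
      · exact absurd (relMem hyz).1 (hSup _ hxy.2)
      · exact Or.inr (Or.inr ⟨hxy.1, (relMem hyz).2⟩)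
      · exact absurd hyz.1 (hSup _ hxy.2)
    · rintro ⟨x, y, (h1 | h1 | h1), (h2 | h2 | h2)⟩
      · exact ho.2 ⟨x, y, h1, h2⟩
      · exact absurd (relMem h1).1 (hSE _ _ h2).2
      · exact absurd (relMem h1).1 (hSup _ h2.2)
      · exact absurd (relMem h2).1 (hSE _ _ h1).2
      · exact hoS.2 ⟨x, y, h1, h2⟩
      · exact absurd h2.1 (hSE _ _ h1).2
      · exact absurd (relMem h2).1 (hSup _ h1.2)
      · exact absurd h1.1 (hSE _ _ h2).2
      · exact absurd h2.1 (hSup _ h1.2)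
  have hvu : supp (sumRel R S) = Set.univ := by
    ext x
    simp only [Set.mem_univ, iff_true]
    by_cases hx : x ∈ supp R
    · obtain ⟨y, hy⟩ := hne
      rw [← hsupp] at hy
      exact ⟨y, Or.inl (Or.inr (Or.inr ⟨hx, hy⟩))⟩
    · have hx' : x ∈ supp S := by rw [hsupp]; exact hx
      obtain ⟨y, hy | hy⟩ := hx'
      · exact ⟨y, Or.inl (Or.inr (Or.inl hy))⟩
      · exact ⟨y, Or.inr (Or.inr (Or.inl hy))⟩
  refine ⟨hord, hvu, ⟨?_⟩⟩
  have memU : ∀ x : ℕ, x ∈ supp (sumRel R S) := by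
    intro x
    rw [hvu]
    trivial
  refine RelIso.mk (Equiv.mk
    (fun x => if h : (x : ℕ) ∈ supp R then Sum.inl ⟨x, h⟩
      else Sum.inr ⟨x, by rw [hsupp]; exact h⟩)
    (Sum.elim (fun a => ⟨a, memU a⟩) (fun b => ⟨b, memU b⟩)) ?_ ?_) ?_
  · intro x
    by_cases h : (x : ℕ) ∈ supp R
    · simp only [dif_pos h, Sum.elim_inl]
    · simp only [dif_neg h, Sum.elim_inr]
  · rintro (a | b)
    · simp [a.2]
    · have : (b : ℕ) ∉ supp R := hSup _ b.2
      simp [this]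
  · intro a b
    simp only [Equiv.coe_fn_mk]
    by_cases ha : (a : ℕ) ∈ supp R <;> by_cases hb : (b : ℕ) ∈ supp R
    · rw [dif_pos ha, dif_pos hb, Sum.lex_inl_inl]
      show R a b ↔ sumRel R S a b
      constructor
      · exact Or.inl
      · rintro (h | h | h)
        · exact h
        · exact absurd ha (hSE _ _ h).1
        · exact absurd hb (hSup _ h.2)
    · rw [dif_pos ha, dif_neg hb]
      constructor
      · intro _
        show sumRel R S a b
        exact Or.inr (Or.inr ⟨ha, by rw [hsupp]; exact hb⟩)
      · intro _
        exact Sum.Lex.sep _ _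
    · rw [dif_neg ha, dif_pos hb]
      constructor
      · intro h
        exact absurd h Sum.lex_inr_inl
      · rintro (h | h | h)
        · exact absurd (relMem h).1 ha
        · exact absurd hb (hSE _ _ h).2
        · exact absurd h.1 ha
    · rw [dif_neg ha, dif_neg hb, Sum.lex_inr_inr]
      show S a b ↔ sumRel R S a b
      constructor
      · exact fun h => Or.inr (Or.inl h)
      · rintro (h | h | h)
        · exact absurd (relMem h).1 ha
        · exact h
        · exact absurd h.1 ha

lemma isoNatOfLt (S : ℕ → ℕ → Prop) (E : Set ℕ) (hinf : E.Infinite) (hsupp : supp S = E)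
    (hS : ∀ a b : ℕ, a ∈ E → b ∈ E → (S a b ↔ a < b)) :
    Nonempty (restrict S ≃r ((· < ·) : ℕ → ℕ → Prop)) := by
  haveI := hinf.to_subtype
  let e : ℕ ≃o ↥E := Nat.Subtype.orderIsoOfNat E
  have hmem : ∀ x : ↥(supp S), (x : ℕ) ∈ E := fun x => hsupp ▸ x.2
  refine ⟨RelIso.mk ((Equiv.setCongr hsupp).trans e.symm.toEquiv) ?_⟩
  intro a b
  show e.symm _ < e.symm _ ↔ restrict S a b
  rw [OrderIso.lt_iff_lt]
  show ((Equiv.setCongr hsupp) a : ℕ) < ((Equiv.setCongr hsupp) b : ℕ) ↔ _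
  simp only [Equiv.setCongr_apply]
  exact (hS a b (hmem a) (hmem b)).symm

lemma isoNatOfGt (S : ℕ → ℕ → Prop) (E : Set ℕ) (hinf : E.Infinite) (hsupp : supp S = E)
    (hS : ∀ a b : ℕ, a ∈ E → b ∈ E → (S a b ↔ b < a)) :
    Nonempty (restrict S ≃r ((· > ·) : ℕ → ℕ → Prop)) := by
  haveI := hinf.to_subtype
  let e : ℕ ≃o ↥E := Nat.Subtype.orderIsoOfNat E
  have hmem : ∀ x : ↥(supp S), (x : ℕ) ∈ E := fun x => hsupp ▸ x.2
  refine ⟨RelIso.mk ((Equiv.setCongr hsupp).trans e.symm.toEquiv) ?_⟩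
  intro a b
  show e.symm _ < e.symm _ ↔ restrict S a b
  rw [OrderIso.lt_iff_lt]
  show ((Equiv.setCongr hsupp) b : ℕ) < ((Equiv.setCongr hsupp) a : ℕ) ↔ _
  simp only [Equiv.setCongr_apply]
  exact (hS a b (hmem a) (hmem b)).symm

theorem infinite_complement_completion (R : ℕ → ℕ → Prop)
    (hs : SyncRel R) (ho : IsOrderRel R) (hinf : (supp R)ᶜ.Infinite) :
    (∃ S : ℕ → ℕ → Prop, SyncRel S ∧ IsOrderRel S ∧ supp S = (supp R)ᶜ ∧
      Nonempty (restrict S ≃r ((· < ·) : ℕ → ℕ → Prop)) ∧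
      SyncRel (sumRel R S) ∧ IsOrderRel (sumRel R S) ∧ supp (sumRel R S) = Set.univ ∧
      Nonempty (restrict (sumRel R S) ≃r Sum.Lex (restrict R) (restrict S))) ∧
    (∃ S : ℕ → ℕ → Prop, SyncRel S ∧ IsOrderRel S ∧ supp S = (supp R)ᶜ ∧
      Nonempty (restrict S ≃r ((· > ·) : ℕ → ℕ → Prop)) ∧
      SyncRel (sumRel R S) ∧ IsOrderRel (sumRel R S) ∧ supp (sumRel R S) = Set.univ ∧
      Nonempty (restrict (sumRel R S) ≃r Sum.Lex (restrict R) (restrict S))) := by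
  classical
  obtain ⟨N, p, hp, hA⟩ := per_supp R hs ho
  have hE : Per (supp R)ᶜ N p := hA.compl
  have hEU : Per Set.univ N p := Per.univ N p
  have hEO : Per ∅ N p := Per.empty N p
  constructor
  · -- ascending copy of ℕ
    set S : ℕ → ℕ → Prop := fun k l => k ∈ (supp R)ᶜ ∧ l ∈ (supp R)ᶜ ∧ k < l with hSdef
    have hoS : IsOrderRel S := ⟨fun x y z h1 h2 => ⟨h1.1, h2.2.1, lt_trans h1.2.2 h2.2.2⟩,
      by rintro ⟨x, y, h1, h2⟩; exact absurd (lt_trans h1.2.2 h2.2.2) (lt_irrefl x)⟩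
    have hSE : ∀ k l, S k l → k ∈ (supp R)ᶜ ∧ l ∈ (supp R)ᶜ := fun k l h => ⟨h.1, h.2.1⟩
    have hsupp : supp S = (supp R)ᶜ := by
      ext x
      constructor
      · rintro ⟨y, h | h⟩
        · exact h.1
        · exact h.2.1
      · intro hx
        obtain ⟨y, hy, hxy⟩ := hinf.exists_gt x
        exact ⟨y, Or.inl ⟨hx, hy, hxy⟩⟩
    have hsync : SyncRel S := by
      have heq : {w : List (Fin 3) | ∃ k l, S k l ∧ encPair k l = w}
          = {w : List (Fin 3) | ∃ a b, 1 ≤ b ∧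
            ((a ∈ (∅ : Set ℕ) ∧ a + b ∈ (∅ : Set ℕ) ∧ w = replicate a 0 ++ replicate b 1) ∨
             (a ∈ (supp R)ᶜ ∧ a + b ∈ (supp R)ᶜ ∧ w = replicate a 0 ++ replicate b 2))} := by
        ext w
        constructor
        · rintro ⟨k, l, ⟨hk, hl, hkl⟩, rfl⟩
          refine ⟨k, l - k, by omega, Or.inr ⟨hk, ?_, ?_⟩⟩
          · rwa [show k + (l - k) = l by omega]
          · exact encPair_lt hkl
        · rintro ⟨a, b, hb, ⟨h, -⟩ | ⟨h1, h2, rfl⟩⟩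
          · exact absurd h (Set.notMem_empty a)
          · refine ⟨a, a + b, ⟨h1, h2, by omega⟩, ?_⟩
            rw [encPair_lt (by omega), show a + b - a = b by omega]
      unfold SyncRel
      rw [heq]
      exact regOfPer N p hp _ _ _ _ hEO hEO hE hE
    have hiso : Nonempty (restrict S ≃r ((· < ·) : ℕ → ℕ → Prop)) :=
      isoNatOfLt S _ hinf hsupp (fun a b ha hb => ⟨fun h => h.2.2, fun h => ⟨ha, hb, h⟩⟩)
    have hm := master R S ho hoS hSE hsupp hinf.nonempty
    have hsyncSum : SyncRel (sumRel R S) := by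
      have heq : {w : List (Fin 3) | ∃ k l, sumRel R S k l ∧ encPair k l = w}
          = {w : List (Fin 3) | ∃ k l, R k l ∧ encPair k l = w} ∪
            {w : List (Fin 3) | ∃ a b, 1 ≤ b ∧
              ((a ∈ (supp R)ᶜ ∧ a + b ∈ supp R ∧ w = replicate a 0 ++ replicate b 1) ∨
               (a ∈ (Set.univ : Set ℕ) ∧ a + b ∈ (supp R)ᶜ ∧ w = replicate a 0 ++ replicate b 2))} := by
        ext w
        rw [Set.mem_union]
        constructor
        · rintro ⟨k, l, h | h | h, rfl⟩
          · exact Or.inl ⟨k, l, h, rfl⟩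
          · right
            refine ⟨k, l - k, by omega, Or.inr ⟨trivial, ?_, ?_⟩⟩
            · rw [show k + (l - k) = l by omega]
              exact h.2.1
            · exact encPair_lt h.2.2
          · have hlE : l ∈ (supp R)ᶜ := by rw [← hsupp]; exact h.2
            have hkl : k ≠ l := fun he => hlE (he ▸ h.1)
            rcases Nat.lt_or_ge k l with hc | hc
            · right
              refine ⟨k, l - k, by omega, Or.inr ⟨trivial, ?_, encPair_lt hc⟩⟩
              rwa [show k + (l - k) = l by omega]
            · have hc' : l < k := by omega
              right
              refine ⟨l, k - l, by omega, Or.inl ⟨hlE, ?_, encPair_gt hc'⟩⟩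
              rw [show l + (k - l) = k by omega]
              exact h.1
        · rintro (⟨k, l, h, rfl⟩ | ⟨a, b, hb, ⟨h1, h2, rfl⟩ | ⟨-, h2, rfl⟩⟩)
          · exact ⟨k, l, Or.inl h, rfl⟩
          · refine ⟨a + b, a, Or.inr (Or.inr ⟨h2, by rw [hsupp]; exact h1⟩), ?_⟩
            rw [encPair_gt (by omega), show a + b - a = b by omega]
          · by_cases haA : a ∈ supp R
            · refine ⟨a, a + b, Or.inr (Or.inr ⟨haA, by rw [hsupp]; exact h2⟩), ?_⟩
              rw [encPair_lt (by omega), show a + b - a = b by omega]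
            · refine ⟨a, a + b, Or.inr (Or.inl ⟨haA, h2, by omega⟩), ?_⟩
              rw [encPair_lt (by omega), show a + b - a = b by omega]
      have hreg := hs.union (regOfPer N p hp _ _ _ _ hE hA hEU hE)
      erw [Language.add_def] at hreg
      unfold SyncRel
      rw [heq]
      exact hreg
    exact ⟨S, hsync, hoS, hsupp, hiso, hsyncSum, hm.1, hm.2.1, hm.2.2⟩
  · -- descending copy of ℕ
    set S : ℕ → ℕ → Prop := fun k l => k ∈ (supp R)ᶜ ∧ l ∈ (supp R)ᶜ ∧ l < k with hSdef
    have hoS : IsOrderRel S := ⟨fun x y z h1 h2 => ⟨h1.1, h2.2.1, lt_trans h2.2.2 h1.2.2⟩,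
      by rintro ⟨x, y, h1, h2⟩; exact absurd (lt_trans h1.2.2 h2.2.2) (lt_irrefl y)⟩
    have hSE : ∀ k l, S k l → k ∈ (supp R)ᶜ ∧ l ∈ (supp R)ᶜ := fun k l h => ⟨h.1, h.2.1⟩
    have hsupp : supp S = (supp R)ᶜ := by
      ext x
      constructor
      · rintro ⟨y, h | h⟩
        · exact h.1
        · exact h.2.1
      · intro hx
        obtain ⟨y, hy, hxy⟩ := hinf.exists_gt x
        exact ⟨y, Or.inr ⟨hy, hx, hxy⟩⟩
    have hsync : SyncRel S := by
      have heq : {w : List (Fin 3) | ∃ k l, S k l ∧ encPair k l = w}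
          = {w : List (Fin 3) | ∃ a b, 1 ≤ b ∧
            ((a ∈ (supp R)ᶜ ∧ a + b ∈ (supp R)ᶜ ∧ w = replicate a 0 ++ replicate b 1) ∨
             (a ∈ (∅ : Set ℕ) ∧ a + b ∈ (∅ : Set ℕ) ∧ w = replicate a 0 ++ replicate b 2))} := by
        ext w
        constructor
        · rintro ⟨k, l, ⟨hk, hl, hlk⟩, rfl⟩
          refine ⟨l, k - l, by omega, Or.inl ⟨hl, ?_, ?_⟩⟩
          · rwa [show l + (k - l) = k by omega]
          · exact encPair_gt hlk
        · rintro ⟨a, b, hb, ⟨h1, h2, rfl⟩ | ⟨h, -⟩⟩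
          · refine ⟨a + b, a, ⟨h2, h1, by omega⟩, ?_⟩
            rw [encPair_gt (by omega), show a + b - a = b by omega]
          · exact absurd h (Set.notMem_empty a)
      unfold SyncRel
      rw [heq]
      exact regOfPer N p hp _ _ _ _ hE hE hEO hEO
    have hiso : Nonempty (restrict S ≃r ((· > ·) : ℕ → ℕ → Prop)) :=
      isoNatOfGt S _ hinf hsupp (fun a b ha hb => ⟨fun h => h.2.2, fun h => ⟨ha, hb, h⟩⟩)
    have hm := master R S ho hoS hSE hsupp hinf.nonempty
    have hsyncSum : SyncRel (sumRel R S) := by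
      have heq : {w : List (Fin 3) | ∃ k l, sumRel R S k l ∧ encPair k l = w}
          = {w : List (Fin 3) | ∃ k l, R k l ∧ encPair k l = w} ∪
            {w : List (Fin 3) | ∃ a b, 1 ≤ b ∧
              ((a ∈ (supp R)ᶜ ∧ a + b ∈ (Set.univ : Set ℕ) ∧ w = replicate a 0 ++ replicate b 1) ∨
               (a ∈ supp R ∧ a + b ∈ (supp R)ᶜ ∧ w = replicate a 0 ++ replicate b 2))} := by
        ext w
        rw [Set.mem_union]
        constructor
        · rintro ⟨k, l, h | h | h, rfl⟩
          · exact Or.inl ⟨k, l, h, rfl⟩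
          · right
            exact ⟨l, k - l, by omega, Or.inl ⟨h.2.1, trivial, encPair_gt h.2.2⟩⟩
          · have hlE : l ∈ (supp R)ᶜ := by rw [← hsupp]; exact h.2
            have hkl : k ≠ l := fun he => hlE (he ▸ h.1)
            rcases Nat.lt_or_ge k l with hc | hc
            · right
              refine ⟨k, l - k, by omega, Or.inr ⟨h.1, ?_, encPair_lt hc⟩⟩
              rwa [show k + (l - k) = l by omega]
            · have hc' : l < k := by omega
              right
              exact ⟨l, k - l, by omega, Or.inl ⟨hlE, trivial, encPair_gt hc'⟩⟩
        · rintro (⟨k, l, h, rfl⟩ | ⟨a, b, hb, ⟨h1, -, rfl⟩ | ⟨h1, h2, rfl⟩⟩)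
          · exact ⟨k, l, Or.inl h, rfl⟩
          · by_cases haA : a + b ∈ supp R
            · refine ⟨a + b, a, Or.inr (Or.inr ⟨haA, by rw [hsupp]; exact h1⟩), ?_⟩
              rw [encPair_gt (by omega), show a + b - a = b by omega]
            · refine ⟨a + b, a, Or.inr (Or.inl ⟨haA, h1, by omega⟩), ?_⟩
              rw [encPair_gt (by omega), show a + b - a = b by omega]
          · refine ⟨a, a + b, Or.inr (Or.inr ⟨h1, by rw [hsupp]; exact h2⟩), ?_⟩
            rw [encPair_lt (by omega), show a + b - a = b by omega]
      have hreg := hs.union (regOfPer N p hp _ _ _ _ hE hEU hA hE)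
      erw [Language.add_def] at hreg
      unfold SyncRel
      rw [heq]
      exact hreg
    exact ⟨S, hsync, hoS, hsupp, hiso, hsyncSum, hm.1, hm.2.1, hm.2.2⟩
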